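/- Let σ = Σ_{i=0}^L m_i be the index of the weight m. The weighted boundary operator ∂_n maps the submodule Γ_{σ,n}(X) = Ideal_{σ,n}(X) + K_{D,n}(X) into Γ_{σ,n-1}(X); in particular, the boundary of a degenerate singular cube is a sum of degenerate cubes plus σ times a chain. -/

import Mathlib

open scoped BigOperators

noncomputable section

/-- The `n`-dimensional unit cube. -/
abbrev Cube (n : ℕ) : Type := Fin n → unitInterval

/-- The point `i/L` of the unit interval, for `i ∈ {0,…,L}`. -/
def vertexVal (L : ℕ) (i : Fin (L + 1)) : unitInterval :=
  ⟨(i : ℝ) / L, ⟨by positivity,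
    div_le_one_of_le₀ (by exact_mod_cast Fin.is_le i) (Nat.cast_nonneg L)⟩⟩

/-- Insertion of the constant `c` at the `j`-th coordinate. -/
def faceMap {n : ℕ} (j : Fin (n + 1)) (c : unitInterval) : C(Cube n, Cube (n + 1)) :=
  ⟨fun x => j.insertNth c x, (continuous_const : Continuous fun _ : Cube n => c).finInsertNth j continuous_id⟩

/-- The face `⟨T⟩_{n,·,j}` of a singular cube at value `c` in direction `j`. -/
def face {X : Type} [TopologicalSpace X] {n : ℕ} (T : C(Cube (n + 1), X)) (j : Fin (n + 1))
    (c : unitInterval) : C(Cube n, X) :=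
  T.comp (faceMap j c)

/-- The module of cubical `n`-chains: the free `R`-module on the continuous maps `Iⁿ → X`. -/
abbrev Kmod (R : Type) [CommRing R] (X : Type) [TopologicalSpace X] (n : ℕ) : Type :=
  C(Cube n, X) →₀ R

/-- The weighted boundary operator. -/
def bdry (R : Type) [CommRing R] {L : ℕ} (m : Fin (L + 1) → R) (X : Type) [TopologicalSpace X]
    (n : ℕ) : Kmod R X (n + 1) →ₗ[R] Kmod R X n :=
  Finsupp.lift (Kmod R X n) R C(Cube (n + 1), X) fun T =>
    ∑ j : Fin (n + 1), ∑ i : Fin (L + 1),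
      ((-1 : R) ^ (j : ℕ) * m i) • Finsupp.single (face T j (vertexVal L i)) (1 : R)


/-- A singular cube is degenerate if it does not depend on some coordinate. -/
def IsDegenerate {X : Type} [TopologicalSpace X] {n : ℕ} (T : C(Cube n, X)) : Prop :=
  ∃ j : Fin n, ∀ (x : Cube n) (c : unitInterval), T (Function.update x j c) = T x

/-- The submodule of chains generated by degenerate singular cubes. -/
def degChains (R : Type) [CommRing R] (X : Type) [TopologicalSpace X] (n : ℕ) :
    Submodule R (Kmod R X n) :=
  Submodule.span R {u | ∃ T : C(Cube n, X), IsDegenerate T ∧ u = Finsupp.single T 1}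

/-- The submodule of chains all of whose coefficients are multiples of `σ`. -/
def sigmaChains (R : Type) [CommRing R] (X : Type) [TopologicalSpace X] (σ : R) (n : ℕ) :
    Submodule R (Kmod R X n) :=
  LinearMap.range (σ • (LinearMap.id : Kmod R X n →ₗ[R] Kmod R X n))

/-- `Γ_{σ,n}(X) = Ideal_{σ,n}(X) + K_{D,n}(X)`. -/
def GammaMod (R : Type) [CommRing R] (X : Type) [TopologicalSpace X] (σ : R) (n : ℕ) :
    Submodule R (Kmod R X n) :=
  sigmaChains R X σ n ⊔ degChains R X n

/-- Insertion commutes with updating a remaining coordinate. -/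
lemma insertNth_update' {n : ℕ} {α : Type} (j : Fin (n + 1)) (c : α) (x : Fin n → α)
    (i : Fin n) (a : α) :
    j.insertNth c (Function.update x i a) = Function.update (j.insertNth c x : Fin (n+1) → α) (j.succAbove i) a := by
  ext t
  rcases eq_or_ne t (j.succAbove i) with rfl | ht
  · simp
  · rw [Function.update_of_ne ht]
    rcases eq_or_ne t j with rfl | htj
    · simp
    · obtain ⟨s, rfl⟩ := Fin.exists_succAbove_eq htj
      have hsi : s ≠ i := fun h => ht (by rw [h])
      simp [Fin.insertNth_apply_succAbove, Function.update_of_ne hsi]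

/-- A face in a direction other than the degenerate direction is degenerate. -/
lemma face_isDegenerate {X : Type} [TopologicalSpace X] {n : ℕ} (T : C(Cube (n + 1), X))
    (k : Fin (n + 1)) (hk : ∀ (x : Cube (n + 1)) (c : unitInterval),
      T (Function.update x k c) = T x)
    (j : Fin (n + 1)) (hj : j ≠ k) (c : unitInterval) : IsDegenerate (face T j c) := by
  obtain ⟨i, hi⟩ := Fin.exists_succAbove_eq (Ne.symm hj)
  refine ⟨i, fun x a => ?_⟩
  simp only [face, ContinuousMap.comp_apply, faceMap, ContinuousMap.coe_mk]
  rw [insertNth_update', hi, hk]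

/-- Faces in the degenerate direction do not depend on the value. -/
lemma face_const {X : Type} [TopologicalSpace X] {n : ℕ} (T : C(Cube (n + 1), X))
    (k : Fin (n + 1)) (hk : ∀ (x : Cube (n + 1)) (c : unitInterval),
      T (Function.update x k c) = T x)
    (c c' : unitInterval) : face T k c = face T k c' := by
  ext x
  simp only [face, ContinuousMap.comp_apply, faceMap, ContinuousMap.coe_mk]
  have h1 : k.insertNth c x = Function.update (k.insertNth c' x : Cube (n+1)) k c := by
    rw [Fin.update_insertNth]
  rw [h1, hk]

lemma bdry_single (R : Type) [CommRing R] {L : ℕ} (m : Fin (L + 1) → R) (X : Type)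
    [TopologicalSpace X] (n : ℕ) (T : C(Cube (n + 1), X)) :
    bdry R m X n (Finsupp.single T 1) =
      ∑ j : Fin (n + 1), ∑ i : Fin (L + 1),
        ((-1 : R) ^ (j : ℕ) * m i) • Finsupp.single (face T j (vertexVal L i)) (1 : R) := by
  simp [bdry, Finsupp.lift_apply, Finsupp.sum_single_index]

/-- The weighted boundary operator maps `Γ_{σ,n}` into `Γ_{σ,n-1}`,
where `σ = Σ mᵢ`; in particular the boundary of a degenerate singular cube is a sum of
degenerate chains plus `σ` times a chain. -/
theorem bdry_maps_Gamma (R : Type) [CommRing R] (L : ℕ) (m : Fin (L + 1) → R) (X : Type)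
    [TopologicalSpace X] (n : ℕ) :
    (∀ u ∈ GammaMod R X (∑ i, m i) (n + 1),
      bdry R m X n u ∈ GammaMod R X (∑ i, m i) n) ∧
    (∀ T : C(Cube (n + 1), X), IsDegenerate T →
      ∃ d w : Kmod R X n, d ∈ degChains R X n ∧
        bdry R m X n (Finsupp.single T 1) = d + (∑ i, m i) • w) := by
  set σ : R := ∑ i, m i with hσ
  have h2 : ∀ T : C(Cube (n + 1), X), IsDegenerate T →
      ∃ d w : Kmod R X n, d ∈ degChains R X n ∧
        bdry R m X n (Finsupp.single T 1) = d + σ • w := by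
    intro T hT
    obtain ⟨k, hk⟩ := hT
    set f : Fin (n + 1) → Kmod R X n := fun j =>
      ∑ i : Fin (L + 1), ((-1 : R) ^ (j : ℕ) * m i) • Finsupp.single (face T j (vertexVal L i)) 1
      with hf
    refine ⟨∑ j ∈ Finset.univ.erase k, f j,
      ((-1 : R) ^ (k : ℕ)) • Finsupp.single (face T k (vertexVal L 0)) 1, ?_, ?_⟩
    · refine Submodule.sum_mem _ fun j hj => ?_
      have hjk : j ≠ k := (Finset.mem_erase.mp hj).1
      refine Submodule.sum_mem _ fun i _ => Submodule.smul_mem _ _ ?_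
      exact Submodule.subset_span ⟨face T j (vertexVal L i),
        face_isDegenerate T k hk j hjk _, rfl⟩
    · rw [bdry_single]
      have hsplit : (∑ j : Fin (n + 1), f j) = f k + ∑ j ∈ Finset.univ.erase k, f j :=
        (Finset.add_sum_erase _ f (Finset.mem_univ k)).symm
      have hfk : f k = σ • (((-1 : R) ^ (k : ℕ)) • Finsupp.single (face T k (vertexVal L 0)) 1) := by
        rw [hf]
        have : ∀ i : Fin (L + 1), face T k (vertexVal L i) = face T k (vertexVal L 0) :=
          fun i => face_const T k hk _ _
        simp only [this]
        rw [smul_smul, ← Finset.sum_smul]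
        congr 1
        rw [hσ, Finset.sum_mul]
        exact Finset.sum_congr rfl fun i _ => mul_comm _ _
      calc (∑ j : Fin (n + 1), f j)
          = f k + ∑ j ∈ Finset.univ.erase k, f j := hsplit
        _ = (∑ j ∈ Finset.univ.erase k, f j) + σ •
              (((-1 : R) ^ (k : ℕ)) • Finsupp.single (face T k (vertexVal L 0)) 1) := by
            rw [hfk, add_comm]
  refine ⟨?_, h2⟩
  intro u hu
  rw [GammaMod, Submodule.mem_sup] at hu
  obtain ⟨y, hy, z, hz, rfl⟩ := hu
  rw [map_add]
  refine add_mem ?_ ?_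
  · obtain ⟨v, hv⟩ := hy
    simp only [LinearMap.smul_apply, LinearMap.id_apply] at hv
    refine Submodule.mem_sup_left ⟨bdry R m X n v, ?_⟩
    simp [← hv]
  · refine Submodule.span_induction (p := fun z _ => bdry R m X n z ∈ GammaMod R X σ n)
      ?_ ?_ ?_ ?_ hz
    · rintro _ ⟨T, hT, rfl⟩
      obtain ⟨d, w, hd, hw⟩ := h2 T hT
      rw [hw]
      refine add_mem (Submodule.mem_sup_right hd) (Submodule.mem_sup_left ⟨w, ?_⟩)
      simp
    · simp [GammaMod]
    · intro a b _ _ ha hb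
      rw [map_add]; exact add_mem ha hb
    · intro r a _ ha
      rw [map_smul]; exact Submodule.smul_mem _ _ ha
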